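/- arXiv:1505.05398 — 4 statements merged into one kernel-verified Lean document; each statement's English description precedes it below -/
import Mathlib

section
/- Let V = V₁ + iV₂ with V₁, V₂ : [0,1] × ℤ → ℝ and V₂ bounded, and let u ∈ C¹([0,1], ℓ²(ℤ)) be a strong solution of ∂_t u(t,n) = i((Δ_d u)(t,n) + V(t,n)u(t,n)). Suppose that Σ_{n>0} n^{2αn}·|u(0,n)|² < ∞ for some α ≤ 1. Then for each t ∈ [0,1] one has Σ_{n>0} n^{αn}·|u(t,n)|² < ∞. -/
open scoped ENNReal

noncomputable section

open scoped ComplexConjugate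


namespace OSWP

abbrev E := lp (fun _ : ℤ => ℂ) 2

lemma summable_sq (x : E) : Summable (fun n : ℤ => ‖x n‖ ^ 2) := by
  have h := (memℓp_gen_iff (p := 2) (by norm_num)).1 (lp.memℓp x)
  have : ∀ n : ℤ, ‖x n‖ ^ ((2:ℝ≥0∞).toReal) = ‖x n‖ ^ 2 := by
    intro n
    rw [ENNReal.toReal_ofNat]
    rw [show ((2:ℝ)) = ((2:ℕ):ℝ) by norm_num, Real.rpow_natCast]
  simpa [this] using h

lemma norm_sq_eq_tsum (x : E) : ‖x‖ ^ 2 = ∑' n : ℤ, ‖x n‖ ^ 2 := by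
  have h := lp.norm_rpow_eq_tsum (p := 2) (by norm_num) x
  have e : ∀ y : ℝ, 0 ≤ y → y ^ ((2:ℝ≥0∞).toReal) = y ^ 2 := by
    intro y hy
    rw [ENNReal.toReal_ofNat, show ((2:ℝ)) = ((2:ℕ):ℝ) by norm_num, Real.rpow_natCast]
  rw [← e _ (norm_nonneg x), h]
  exact tsum_congr fun n => e _ (norm_nonneg _)

lemma norm_le_of_coord {C : ℝ} (hC : 0 ≤ C) (x y : E)
    (h : ∀ n, ‖y n‖ ≤ C * ‖x n‖) : ‖y‖ ≤ C * ‖x‖ := by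
  have h2 : ‖y‖ ^ 2 ≤ (C * ‖x‖) ^ 2 := by
    rw [norm_sq_eq_tsum, mul_pow, norm_sq_eq_tsum, ← tsum_mul_left]
    refine Summable.tsum_le_tsum (fun n => ?_) (summable_sq y) ((summable_sq x).mul_left _)
    calc ‖y n‖ ^ 2 ≤ (C * ‖x n‖) ^ 2 := by
          exact pow_le_pow_left₀ (norm_nonneg _) (h n) 2
      _ = C ^ 2 * ‖x n‖ ^ 2 := by ring
  exact (pow_le_pow_iff_left₀ (norm_nonneg _) (by positivity) (two_ne_zero)).1 h2

/-- multiplication operator by a bounded sequence -/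
def mulOp (c : ℤ → ℂ) (C : ℝ) (hC : 0 ≤ C) (hc : ∀ n, ‖c n‖ ≤ C) : E →L[ℂ] E :=
  LinearMap.mkContinuous
    { toFun := fun x => ⟨fun n => c n * x n, by
        apply memℓp_gen (p := 2)
        have h := summable_sq x
        refine Summable.of_nonneg_of_le (fun n => by positivity)
          (fun n => ?_) (h.mul_left (C ^ 2))
        have hr : ‖c n * x n‖ ^ ((2:ℝ≥0∞).toReal) = ‖c n * x n‖ ^ 2 := by
          rw [ENNReal.toReal_ofNat, show ((2:ℝ)) = ((2:ℕ):ℝ) by norm_num, Real.rpow_natCast]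
        rw [hr, norm_mul]
        calc (‖c n‖ * ‖x n‖) ^ 2 ≤ (C * ‖x n‖) ^ 2 := by
              apply pow_le_pow_left₀ (by positivity)
              exact mul_le_mul_of_nonneg_right (hc n) (norm_nonneg _)
          _ = C ^ 2 * ‖x n‖ ^ 2 := by ring⟩
      map_add' := fun x y => by
        apply lp.ext
        funext n
        simp only [lp.coeFn_add, Pi.add_apply, mul_add]
      map_smul' := fun a x => by
        apply lp.ext
        funext n
        simp only [lp.coeFn_smul, Pi.smul_apply, smul_eq_mul, RingHom.id_apply]
        ring }
    C (fun x => by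
      apply norm_le_of_coord hC x
      intro n
      show ‖c n * x n‖ ≤ C * ‖x n‖
      rw [norm_mul]
      exact mul_le_mul_of_nonneg_right (hc n) (norm_nonneg _))

@[simp] lemma mulOp_apply (c : ℤ → ℂ) (C : ℝ) (hC : 0 ≤ C) (hc : ∀ n, ‖c n‖ ≤ C)
    (x : E) (n : ℤ) : (mulOp c C hC hc x) n = c n * x n := rfl

/-- coordinate evaluation -/
def evalCLM (n : ℤ) : E →L[ℂ] ℂ :=
  LinearMap.mkContinuous
    { toFun := fun x => x n
      map_add' := fun x y => by simp [lp.coeFn_add]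
      map_smul' := fun a x => by simp [lp.coeFn_smul] }
    1 (fun x => by show ‖x n‖ ≤ 1 * ‖x‖; simpa using lp.norm_apply_le_norm (by norm_num) x n)

@[simp] lemma evalCLM_apply (n : ℤ) (x : E) : evalCLM n x = x n := rfl

end OSWP

namespace OSWP2

/-- `ψ n = n log n` for `n ≥ 1`, else `0`. -/
def ψ (n : ℤ) : ℝ := if 1 ≤ n then (n : ℝ) * Real.log n else 0

lemma ψ_nonneg (n : ℤ) : 0 ≤ ψ n := by
  unfold ψ
  split
  · have h1 : (1:ℝ) ≤ (n:ℝ) := by exact_mod_cast ‹1 ≤ n›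
    have := Real.log_nonneg h1
    positivity
  · exact le_refl 0

lemma ψ_eq_zero {n : ℤ} (h : n ≤ 1) : ψ n = 0 := by
  unfold ψ
  split
  · have : n = 1 := le_antisymm h ‹1 ≤ n›
    subst this; simp
  · rfl

lemma ψ_mono : Monotone ψ := by
  intro a b hab
  by_cases ha : 1 ≤ a
  · have hb : 1 ≤ b := le_trans ha hab
    have ha' : (1:ℝ) ≤ (a:ℝ) := by exact_mod_cast ha
    have hab' : (a:ℝ) ≤ (b:ℝ) := by exact_mod_cast hab
    unfold ψ
    rw [if_pos ha, if_pos hb]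
    have hl : Real.log a ≤ Real.log b := Real.log_le_log (by linarith) hab'
    have := Real.log_nonneg ha'
    apply mul_le_mul hab' hl this (by linarith)
  · unfold ψ
    rw [if_neg ha]
    have := ψ_nonneg b
    unfold ψ at this
    exact this

lemma ψ_incr {m : ℤ} (hm : 1 ≤ m) : ψ (m + 1) - ψ m ≤ Real.log (m + 1) + 1 := by
  have hm' : (1:ℝ) ≤ (m:ℝ) := by exact_mod_cast hm
  have hmpos : (0:ℝ) < (m:ℝ) := by linarith
  have hm1 : (0:ℝ) < (m:ℝ) + 1 := by linarith
  unfold ψ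
  rw [if_pos hm, if_pos (by linarith : 1 ≤ m + 1)]
  push_cast
  have hlog : Real.log ((m:ℝ) + 1) - Real.log (m:ℝ) ≤ 1 / (m:ℝ) := by
    rw [← Real.log_div (by linarith) (ne_of_gt hmpos)]
    have := Real.log_le_sub_one_of_pos (show (0:ℝ) < ((m:ℝ)+1)/(m:ℝ) by positivity)
    have heq : ((m:ℝ)+1)/(m:ℝ) - 1 = 1 / (m:ℝ) := by field_simp; ring
    linarith
  have h2 : (m:ℝ) * (Real.log ((m:ℝ)+1) - Real.log (m:ℝ)) ≤ (m:ℝ) * (1 / (m:ℝ)) :=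
    mul_le_mul_of_nonneg_left hlog (by linarith)
  have h3 : (m:ℝ) * (1 / (m:ℝ)) = 1 := by field_simp
  nlinarith [h2]

/-- capped version -/
def ψc (N n : ℤ) : ℝ := ψ (min n N)

lemma ψc_nonneg (N n : ℤ) : 0 ≤ ψc N n := ψ_nonneg _
lemma ψc_mono (N : ℤ) : Monotone (ψc N) := fun a b h => ψ_mono (min_le_min_right N h)
lemma ψc_le_ψN (N n : ℤ) : ψc N n ≤ ψ N := ψ_mono (min_le_right n N)
lemma ψc_le_ψ (N n : ℤ) : ψc N n ≤ ψ n := ψ_mono (min_le_left n N)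

lemma ψc_succ_le (N n : ℤ) : ψc N (n + 1) ≤ ψ (min n N + 1) := by
  apply ψ_mono
  have : min (n+1) N ≤ min (n+1) (N+1) := min_le_min_left _ (by omega)
  omega
lemma ψc_pred_ge (N n : ℤ) : ψ (min n N - 1) ≤ ψc N (n - 1) := by
  apply ψ_mono
  have : min (n-1) (N-1) ≤ min (n-1) N := min_le_min_left _ (by omega)
  omega

/-- the uniform constant -/
def Kc (α : ℝ) : ℝ := 2 * Real.exp 1 * (Real.exp (8 * Real.exp 1 / α) + 2) + 9

lemma Kc_pos (α : ℝ) : 9 ≤ Kc α := by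
  unfold Kc
  have := Real.exp_pos (1:ℝ)
  have := Real.exp_pos (8 * Real.exp 1 / α)
  nlinarith

/-- the key per-site inequality, uncapped version -/
lemma key_aux (α : ℝ) (hα0 : 0 < α) (hα1 : α ≤ 1) (m : ℤ) :
    Real.exp (α * (ψ (m+1) - ψ m)) + Real.exp (α * (ψ m - ψ (m-1)))
      - α * ψ m ≤ Kc α := by
  by_cases hm1 : m ≤ 1
  · have h1 : ψ m = 0 := ψ_eq_zero hm1
    have h2 : ψ (m-1) = 0 := ψ_eq_zero (by omega)
    have h3 : ψ (m+1) ≤ ψ 2 := ψ_mono (by omega)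
    have h4 : ψ (2:ℤ) = 2 * Real.log 2 := by
      unfold ψ; rw [if_pos (by norm_num)]; norm_num
    have hl2 : (0:ℝ) ≤ Real.log 2 := Real.log_nonneg (by norm_num)
    have b1 : Real.exp (α * (ψ (m+1) - ψ m)) ≤ 4 := by
      have harg : α * (ψ (m+1) - ψ m) ≤ 2 * Real.log 2 := by
        rw [h1]
        nlinarith [ψ_nonneg (m+1)]
      have b1' : Real.exp (2 * Real.log 2) = 4 := by
        rw [show (2:ℝ) * Real.log 2 = Real.log 4 by
          rw [show (4:ℝ) = 2 ^ 2 by norm_num, Real.log_pow]; push_cast; ring]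
        exact Real.exp_log (by norm_num)
      calc Real.exp (α * (ψ (m+1) - ψ m)) ≤ Real.exp (2 * Real.log 2) :=
            Real.exp_le_exp.2 harg
        _ = 4 := b1'
    have b2 : Real.exp (α * (ψ m - ψ (m-1))) = 1 := by
      rw [h1, h2]; simp
    have b3 : α * ψ m = 0 := by rw [h1]; ring
    have := Kc_pos α
    linarith
  · push_neg at hm1
    have hm2 : 2 ≤ m := by omega
    have hm1' : 1 ≤ m := by omega
    have hmm : 1 ≤ m - 1 := by omega
    have i1 : ψ (m+1) - ψ m ≤ Real.log ((m:ℝ)+1) + 1 := ψ_incr hm1'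
    have i2 : ψ m - ψ (m-1) ≤ Real.log (m:ℝ) + 1 := by
      have h := ψ_incr (m := m - 1) hmm
      rw [show m - 1 + 1 = m by omega] at h
      push_cast at h
      have e : ((m:ℝ) - 1 + 1) = (m:ℝ) := by ring
      rw [e] at h
      exact h
    have hml : (1:ℝ) ≤ (m:ℝ) := by exact_mod_cast hm1'
    have hlogm : Real.log (m:ℝ) ≤ Real.log ((m:ℝ)+1) :=
      Real.log_le_log (by linarith) (by linarith)
    have hlogm0 : 0 ≤ Real.log (m:ℝ) := Real.log_nonneg hml
    have hexp1 : (0:ℝ) < Real.exp 1 := Real.exp_pos 1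
    have bexp : ∀ x : ℝ, x ≤ Real.log ((m:ℝ)+1) + 1 →
        Real.exp (α * x) ≤ Real.exp 1 * ((m:ℝ) + 1) := by
      intro x hx
      have hlg : 0 ≤ Real.log ((m:ℝ)+1) := Real.log_nonneg (by linarith)
      have h1 : α * x ≤ Real.log ((m:ℝ)+1) + 1 := by
        rcases le_or_gt x 0 with hx0 | hx0
        · nlinarith
        · nlinarith
      calc Real.exp (α * x) ≤ Real.exp (Real.log ((m:ℝ)+1) + 1) := Real.exp_le_exp.2 h1
        _ = Real.exp 1 * ((m:ℝ)+1) := by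
            rw [Real.exp_add, Real.exp_log (by linarith)]; ring
    have bb1 : Real.exp (α * (ψ (m+1) - ψ m)) ≤ Real.exp 1 * ((m:ℝ)+1) := bexp _ i1
    have bb2 : Real.exp (α * (ψ m - ψ (m-1))) ≤ Real.exp 1 * ((m:ℝ)+1) :=
      bexp _ (by linarith)
    have hψm2 : ψ m = (m:ℝ) * Real.log (m:ℝ) := by unfold ψ; rw [if_pos hm1']
    rcases le_or_gt (m:ℝ) (Real.exp (8 * Real.exp 1 / α)) with hmX | hmX
    · have hterm : 0 ≤ α * ψ m := by
        rw [hψm2]; positivity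
      have hb : Real.exp 1 * ((m:ℝ)+1)
          ≤ Real.exp 1 * (Real.exp (8 * Real.exp 1 / α) + 2) := by nlinarith
      unfold Kc
      linarith
    · have hXpos : (0:ℝ) < Real.exp (8 * Real.exp 1 / α) := Real.exp_pos _
      have hlogX : Real.log (Real.exp (8 * Real.exp 1 / α)) ≤ Real.log (m:ℝ) :=
        Real.log_le_log hXpos hmX.le
      rw [Real.log_exp] at hlogX
      have h9 : 8 * Real.exp 1 * (m:ℝ) ≤ α * ψ m := by
        rw [hψm2]
        calc 8 * Real.exp 1 * (m:ℝ) = α * (m:ℝ) * (8 * Real.exp 1 / α) := by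
              field_simp
          _ ≤ α * (m:ℝ) * Real.log (m:ℝ) := by
              apply mul_le_mul_of_nonneg_left hlogX (by positivity)
          _ = α * ((m:ℝ) * Real.log (m:ℝ)) := by ring
      have h10 : Real.exp 1 * ((m:ℝ)+1) ≤ 2 * (Real.exp 1 * (m:ℝ)) := by nlinarith
      have := Kc_pos α
      nlinarith

/-- the key per-site inequality -/
lemma key (α : ℝ) (hα0 : 0 < α) (hα1 : α ≤ 1) (N : ℤ) (n : ℤ) :
    Real.exp (α * (ψc N (n+1) - ψc N n)) + Real.exp (α * (ψc N n - ψc N (n-1)))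
      - α * ψc N n ≤ Kc α := by
  have hc0 : ψc N n = ψ (min n N) := rfl
  have e1 : ψc N (n+1) - ψc N n ≤ ψ (min n N + 1) - ψ (min n N) := by
    have := ψc_succ_le N n; linarith
  have e2 : ψc N n - ψc N (n-1) ≤ ψ (min n N) - ψ (min n N - 1) := by
    have := ψc_pred_ge N n; linarith
  have mono1 : Real.exp (α * (ψc N (n+1) - ψc N n))
      ≤ Real.exp (α * (ψ (min n N + 1) - ψ (min n N))) :=
    Real.exp_le_exp.2 (mul_le_mul_of_nonneg_left e1 hα0.le)
  have mono2 : Real.exp (α * (ψc N n - ψc N (n-1)))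
      ≤ Real.exp (α * (ψ (min n N) - ψ (min n N - 1))) :=
    Real.exp_le_exp.2 (mul_le_mul_of_nonneg_left e2 hα0.le)
  have main := key_aux α hα0 hα1 (min n N)
  have hc0' : α * ψc N n = α * ψ (min n N) := by rw [hc0]
  linarith

end OSWP2

namespace OSWP3

lemma norm_sq_c (z : ℂ) : ‖z‖^2 = z.re*z.re + z.im*z.im := by
  rw [← Complex.normSq_apply, Complex.normSq_eq_norm_sq]

lemma re_c_self (c : ℝ) (z : ℂ) : (conj z * ((c:ℂ) * z)).re = c * ‖z‖^2 := by
  rw [norm_sq_c]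
  simp [Complex.mul_re, Complex.mul_im]
  ring

lemma re_c_mul (c : ℝ) (a b : ℂ) : (conj a * ((c:ℂ)*b)).re = c * (conj a * b).re := by
  simp [Complex.mul_re, Complex.mul_im]
  ring

lemma re_c_mul' (c : ℝ) (a b : ℂ) : (conj b * ((c:ℂ)*a)).re = c * (conj a * b).re := by
  simp [Complex.mul_re, Complex.mul_im]
  ring

lemma re_split (a b c : ℂ) (v₁ v₂ : ℝ) :
    (conj a * (Complex.I * (b + c - 2*a + ((v₁:ℂ) + Complex.I*(v₂:ℂ))*a))).re
      = (Complex.I * (conj a * b)).re + (Complex.I * (conj a * c)).re - v₂ * ‖a‖^2 := by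
  rw [norm_sq_c]
  simp [Complex.mul_re, Complex.mul_im, Complex.add_re, Complex.add_im,
    Complex.sub_re, Complex.sub_im]
  ring

lemma re_I_z (z : ℂ) : (Complex.I * z).re = -z.im := by simp
lemma re_I_conj (z : ℂ) : (Complex.I * conj z).re = z.im := by simp

lemma abs_im_le (a b : ℂ) : |(conj a * b).im| ≤ ‖a‖ * ‖b‖ := by
  calc |(conj a * b).im| ≤ ‖conj a * b‖ := Complex.abs_im_le_norm _
    _ = ‖a‖ * ‖b‖ := by rw [norm_mul, RCLike.norm_conj]

/-- pointwise cross-term bound -/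
lemma cross_bound (A B G : ℝ) (hAB : A ≤ B) (hG : (B - A)/2 ≤ G) (hG0 : 0 ≤ G)
    (zim p q : ℝ) (hp : 0 ≤ p) (hq : 0 ≤ q) (hz : |zim| ≤ p * q) :
    2 * Real.exp A * (-zim) + 2 * Real.exp B * zim
      ≤ Real.exp G * (Real.exp A * p^2 + Real.exp B * q^2) := by
  set ea := Real.exp (A/2) with hea
  set eb := Real.exp (B/2) with heb
  have hea0 : 0 < ea := Real.exp_pos _
  have heb0 : 0 < eb := Real.exp_pos _
  have hEA : Real.exp A = ea * ea := by rw [hea, ← Real.exp_add]; ring_nf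
  have hEB : Real.exp B = eb * eb := by rw [heb, ← Real.exp_add]; ring_nf
  have hg1 : (1:ℝ) ≤ Real.exp G := Real.one_le_exp hG0
  have hebea : eb ≤ Real.exp G * ea := by
    have h1 : eb = ea * Real.exp ((B - A)/2) := by
      rw [hea, heb, ← Real.exp_add]; ring_nf
    have h2 : Real.exp ((B-A)/2) ≤ Real.exp G := Real.exp_le_exp.2 hG
    calc eb = ea * Real.exp ((B-A)/2) := h1
      _ ≤ ea * Real.exp G := by nlinarith
      _ = Real.exp G * ea := by ring
  have hBA : 0 ≤ eb*eb - ea*ea := by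
    rw [← hEA, ← hEB]
    have := Real.exp_le_exp.2 hAB
    linarith
  -- LHS = 2 (e^B - e^A) zim
  have hL : 2 * Real.exp A * (-zim) + 2 * Real.exp B * zim
      = 2 * (Real.exp B - Real.exp A) * zim := by ring
  rw [hL, hEA, hEB]
  have s1 : 2 * (eb*eb - ea*ea) * zim ≤ 2 * (eb*eb) * (p*q) := by
    have h1 : (eb*eb - ea*ea) * zim ≤ (eb*eb - ea*ea) * |zim| := by
      apply mul_le_mul_of_nonneg_left (le_abs_self _) hBA
    have h2 : (eb*eb - ea*ea) * |zim| ≤ (eb*eb) * |zim| := by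
      apply mul_le_mul_of_nonneg_right _ (abs_nonneg _)
      nlinarith
    have h3 : (eb*eb) * |zim| ≤ (eb*eb) * (p*q) := by
      apply mul_le_mul_of_nonneg_left hz (by positivity)
    linarith
  have s2 : 2 * (eb*eb) * (p*q) ≤ Real.exp G * (2 * (ea*p) * (eb*q)) := by
    have h1 : (eb*p) ≤ Real.exp G * (ea * p) := by
      calc eb * p ≤ (Real.exp G * ea) * p := mul_le_mul_of_nonneg_right hebea hp
        _ = Real.exp G * (ea * p) := by ring
    calc 2 * (eb*eb) * (p*q) = 2 * (eb*p) * (eb*q) := by ring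
      _ ≤ 2 * (Real.exp G * (ea*p)) * (eb*q) := by
          apply mul_le_mul_of_nonneg_right _ (by positivity)
          nlinarith
      _ = Real.exp G * (2 * (ea*p) * (eb*q)) := by ring
  have s3 : Real.exp G * (2 * (ea*p) * (eb*q)) ≤ Real.exp G * ((ea*ea)*p^2 + (eb*eb)*q^2) := by
    apply mul_le_mul_of_nonneg_left _ (by positivity)
    nlinarith [sq_nonneg (ea*p - eb*q)]
  linarith

end OSWP3

namespace OSWP4
open OSWP OSWP2 OSWP3

/-- time-dependent capped weight -/
def wc (α t : ℝ) (N n : ℤ) : ℝ := Real.exp (α * (2 - t) * ψc N n)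

lemma wc_pos (α t : ℝ) (N n : ℤ) : 0 < wc α t N n := Real.exp_pos _

/-- uniform bound on the weight -/
def Wb (α t : ℝ) (N : ℤ) : ℝ := Real.exp (|α * (2 - t)| * ψ N)

lemma wc_le_Wb (α t : ℝ) (N n : ℤ) : wc α t N n ≤ Wb α t N := by
  apply Real.exp_le_exp.2
  calc α * (2 - t) * ψc N n ≤ |α * (2 - t)| * ψc N n :=
        mul_le_mul_of_nonneg_right (le_abs_self _) (ψc_nonneg N n)
    _ ≤ |α * (2 - t)| * ψ N :=
        mul_le_mul_of_nonneg_left (ψc_le_ψN N n) (abs_nonneg _)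

lemma Wb_pos (α t : ℝ) (N : ℤ) : 0 < Wb α t N := Real.exp_pos _

lemma norm_coe_wc (α t : ℝ) (N n : ℤ) : ‖((wc α t N n : ℝ) : ℂ)‖ ≤ Wb α t N := by
  rw [Complex.norm_real, Real.norm_eq_abs, abs_of_pos (wc_pos α t N n)]
  exact wc_le_Wb α t N n

/-- the multiplication operator by the weight -/
def W (α : ℝ) (N : ℤ) (t : ℝ) : E →L[ℂ] E :=
  mulOp (fun n => ((wc α t N n : ℝ) : ℂ)) (Wb α t N) (Wb_pos α t N).le
    (fun n => norm_coe_wc α t N n)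

@[simp] lemma W_apply (α : ℝ) (N : ℤ) (t : ℝ) (x : E) (n : ℤ) :
    (W α N t x) n = (wc α t N n : ℂ) * x n := rfl

/-- its time-derivative -/
def W' (α : ℝ) (N : ℤ) (t : ℝ) : E →L[ℂ] E :=
  mulOp (fun n => ((-(α * ψc N n) * wc α t N n : ℝ) : ℂ)) (|α| * ψ N * Wb α t N)
    (mul_nonneg (mul_nonneg (abs_nonneg α) (OSWP2.ψ_nonneg N)) (Wb_pos α t N).le)
    (fun n => by
      rw [Complex.norm_real, Real.norm_eq_abs, abs_mul, abs_neg, abs_mul,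
        abs_of_pos (wc_pos α t N n), abs_of_nonneg (ψc_nonneg N n)]
      apply mul_le_mul
      · exact mul_le_mul_of_nonneg_left (ψc_le_ψN N n) (abs_nonneg _)
      · exact wc_le_Wb α t N n
      · exact (wc_pos α t N n).le
      · exact mul_nonneg (abs_nonneg _) (OSWP2.ψ_nonneg N))

@[simp] lemma W'_apply (α : ℝ) (N : ℤ) (t : ℝ) (x : E) (n : ℤ) :
    (W' α N t x) n = ((-(α * ψc N n) * wc α t N n : ℝ) : ℂ) * x n := rfl

lemma ψ_nonneg' (N : ℤ) : 0 ≤ ψ N := OSWP2.ψ_nonneg N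

/-- derivative of the weight operator family -/
lemma hasDerivW (α : ℝ) (hα0 : 0 ≤ α) (N : ℤ) {t : ℝ} (ht : t ∈ Set.Icc (0:ℝ) 1) :
    HasDerivWithinAt (fun s => W α N s) (W' α N t) (Set.Icc (0:ℝ) 1) t := by
  rw [hasDerivWithinAt_iff_isLittleO]
  set A := α * ψ N with hA
  have hA0 : 0 ≤ A := mul_nonneg hα0 (ψ_nonneg' N)
  set C2 : ℝ := Real.exp (2*A) * A^2 with hC2
  have hC20 : 0 ≤ C2 := by positivity
  -- main quantitative bound
  have hquad : ∀ s ∈ Set.Icc (0:ℝ) 1, |s - t| * (A+1) ≤ 1 →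
      ‖W α N s - W α N t - (s - t) • W' α N t‖ ≤ C2 * (s-t)^2 := by
    intro s hs hst
    apply ContinuousLinearMap.opNorm_le_bound _ (by positivity)
    intro x
    have hcoord : ∀ n, ‖((W α N s - W α N t - (s - t) • W' α N t) x) n‖
        ≤ (C2 * (s-t)^2) * ‖x n‖ := by
      intro n
      have hval : ((W α N s - W α N t - (s - t) • W' α N t) x) n
          = ((wc α s N n - wc α t N n - (s-t) * (-(α * ψc N n) * wc α t N n) : ℝ) : ℂ)
            * x n := by
        simp only [ContinuousLinearMap.sub_apply, ContinuousLinearMap.smul_apply,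
          lp.coeFn_sub, Pi.sub_apply, lp.coeFn_smul, Pi.smul_apply, W_apply, W'_apply]
        push_cast [Complex.real_smul]
        ring
      rw [hval, norm_mul]
      apply mul_le_mul_of_nonneg_right _ (norm_nonneg _)
      rw [Complex.norm_real, Real.norm_eq_abs]
      -- scalar Taylor estimate
      set a := α * ψc N n with ha
      have ha0 : 0 ≤ a := mul_nonneg hα0 (ψc_nonneg N n)
      have haA : a ≤ A := mul_le_mul_of_nonneg_left (ψc_le_ψN N n) hα0
      have hws : wc α s N n = wc α t N n * Real.exp (-(a * (s - t))) := by
        rw [wc, wc, ← Real.exp_add]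
        congr 1
        ring
      have hx1 : |(-(a * (s - t)))| ≤ 1 := by
        rw [abs_neg, abs_mul, abs_of_nonneg ha0]
        calc a * |s - t| ≤ (A+1) * |s-t| := by
              apply mul_le_mul_of_nonneg_right (by linarith) (abs_nonneg _)
          _ = |s-t| * (A+1) := by ring
          _ ≤ 1 := hst
      have htay := Real.abs_exp_sub_one_sub_id_le hx1
      have hwt : wc α t N n ≤ Real.exp (2*A) := by
        rw [wc]
        apply Real.exp_le_exp.2
        have h2t : 0 ≤ 2 - t := by
          rcases ht with ⟨_, ht1⟩; linarith
        have h2t' : 2 - t ≤ 2 := by rcases ht with ⟨ht0, _⟩; linarith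
        calc α * (2-t) * ψc N n ≤ α * 2 * ψc N n := by
              apply mul_le_mul_of_nonneg_right _ (ψc_nonneg N n)
              apply mul_le_mul_of_nonneg_left h2t' hα0
          _ ≤ α * 2 * ψ N := by
              apply mul_le_mul_of_nonneg_left (ψc_le_ψN N n) (by linarith)
          _ = 2 * A := by rw [hA]; ring
      have key : wc α s N n - wc α t N n - (s-t) * (-(a) * wc α t N n)
          = wc α t N n * (Real.exp (-(a*(s-t))) - 1 - (-(a*(s-t)))) := by
        rw [hws]; ring
      rw [key, abs_mul, abs_of_pos (wc_pos α t N n)]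
      calc wc α t N n * |Real.exp (-(a*(s-t))) - 1 - (-(a*(s-t)))|
          ≤ Real.exp (2*A) * ((-(a*(s-t)))^2) := by
            apply mul_le_mul hwt htay (abs_nonneg _) (by positivity)
        _ = Real.exp (2*A) * (a^2 * (s-t)^2) := by ring
        _ ≤ Real.exp (2*A) * (A^2 * (s-t)^2) := by
            apply mul_le_mul_of_nonneg_left _ (by positivity)
            apply mul_le_mul_of_nonneg_right _ (sq_nonneg _)
            exact pow_le_pow_left₀ ha0 haA 2
        _ = C2 * (s-t)^2 := by rw [hC2]; ring
    exact norm_le_of_coord (by positivity) x _ hcoord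
  -- conclude littleO
  rw [Asymptotics.isLittleO_iff]
  intro ε hε
  have hδ : 0 < min (1/(A+1)) (ε/(C2+1)) := by
    apply lt_min <;> positivity
  have hev : ∀ᶠ s in nhdsWithin t (Set.Icc (0:ℝ) 1),
      |s - t| < min (1/(A+1)) (ε/(C2+1)) ∧ s ∈ Set.Icc (0:ℝ) 1 := by
    apply Filter.Eventually.and
    · apply Filter.Eventually.filter_mono nhdsWithin_le_nhds
      have := Metric.ball_mem_nhds t hδ
      filter_upwards [this] with s hs
      rwa [Metric.mem_ball, Real.dist_eq] at hs
    · exact eventually_mem_nhdsWithin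
  filter_upwards [hev] with s hs
  obtain ⟨hs1, hs2⟩ := hs
  have hb1 : |s - t| * (A+1) ≤ 1 := by
    have h1 : |s - t| ≤ 1/(A+1) := le_trans hs1.le (min_le_left _ _)
    calc |s - t| * (A+1) ≤ (1/(A+1)) * (A+1) := by
          apply mul_le_mul_of_nonneg_right h1 (by positivity)
      _ = 1 := by field_simp
  refine le_trans (hquad s hs2 hb1) ?_
  rw [Real.norm_eq_abs]
  have h2 : |s - t| ≤ ε/(C2+1) := le_trans hs1.le (min_le_right _ _)
  have hsq : (s-t)^2 = |s - t| * |s - t| := by rw [← sq_abs]; ring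
  rw [hsq, ← mul_assoc]
  apply mul_le_mul_of_nonneg_right _ (abs_nonneg _)
  have hc1 : C2 * |s - t| ≤ C2 * (ε/(C2+1)) := mul_le_mul_of_nonneg_left h2 hC20
  have hc2 : C2 * (ε/(C2+1)) ≤ ε := by
    rw [div_eq_inv_mul]
    have he : C2 * ((C2+1)⁻¹ * ε) = (C2/(C2+1)) * ε := by field_simp
    rw [he]
    apply mul_le_of_le_one_left hε.le
    rw [div_le_one (by positivity)]
    linarith
  linarith

end OSWP4

namespace OSWP5
open OSWP OSWP2 OSWP3 OSWP4

local notation "⟪" x ", " y "⟫" => @inner ℂ _ _ x y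

lemma re_conj_comm (a b : ℂ) : (conj a * b).re = (conj b * a).re := by
  simp [Complex.mul_re]
  ring

lemma re_conj_self (z : ℂ) : (conj z * z).re = ‖z‖^2 := by
  have := re_c_self 1 z
  simpa using this

lemma re_inner_eq (x z : OSWP.E) : (⟪x, z⟫).re = ∑' n : ℤ, (conj (x n) * z n).re := by
  rw [lp.inner_eq_tsum]
  have hs : Summable fun n : ℤ => ⟪x n, z n⟫ := lp.summable_inner x z
  have := Complex.reCLM.map_tsum hs
  simp only [Complex.reCLM_apply] at this
  rw [this]
  apply tsum_congr
  intro n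
  rw [RCLike.inner_apply, mul_comm]

/-- doubled weight `g n` -/
def gg (α : ℝ) (N n : ℤ) : ℝ := Real.exp (α * (ψc N (n+1) - ψc N n))

lemma gg_pos (α : ℝ) (N n : ℤ) : 0 < gg α N n := Real.exp_pos _

lemma gg_le (α : ℝ) (hα0 : 0 ≤ α) (N n : ℤ) : gg α N n ≤ Real.exp (α * ψ N) := by
  apply Real.exp_le_exp.2
  apply mul_le_mul_of_nonneg_left _ hα0
  have h1 := ψc_le_ψN N (n+1)
  have h2 := ψc_nonneg N n
  linarith

set_option maxHeartbeats 2000000 in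
/-- The core differential inequality. -/
lemma Sprime_le (α M : ℝ) (hα0 : 0 < α) (hα1 : α ≤ 1) (hM : 0 ≤ M)
    (V₁ V₂ : ℝ → ℤ → ℝ) (hV₂ : ∀ t n, |V₂ t n| ≤ M)
    (u : ℝ → OSWP.E) (D : ℝ → OSWP.E)
    (hDc : ∀ t ∈ Set.Icc (0:ℝ) 1, ∀ n : ℤ,
      (D t) n = Complex.I * (u t (n + 1) + u t (n - 1) - 2 * u t n
          + ((V₁ t n : ℂ) + Complex.I * (V₂ t n : ℂ)) * u t n))
    (N : ℤ) {t : ℝ} (ht : t ∈ Set.Icc (0:ℝ) 1) :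
    (⟪u t, W' α N t (u t) + W α N t (D t)⟫ + ⟪D t, W α N t (u t)⟫).re
      ≤ (Kc α + 2*M) * ∑' n : ℤ, wc α t N n * ‖u t n‖^2 := by
  set x : OSWP.E := u t with hx
  set d : OSWP.E := D t with hd
  set P : ℤ → ℝ := fun n => wc α t N n * ‖x n‖^2 with hP
  have hP0 : ∀ n, 0 ≤ P n := fun n => mul_nonneg (wc_pos α t N n).le (sq_nonneg _)
  -- basic summabilities
  have sqx : Summable (fun n : ℤ => ‖x n‖^2) := summable_sq x
  have sqx1 : Summable (fun n : ℤ => ‖x (n+1)‖^2) := by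
    have h := (Equiv.summable_iff (Equiv.addRight (1:ℤ))
      (f := fun n : ℤ => ‖x n‖^2)).2 sqx
    exact h.congr (fun n => rfl)
  have sqxm1 : Summable (fun n : ℤ => ‖x (n-1)‖^2) := by
    have h := (Equiv.summable_iff (Equiv.subRight (1:ℤ))
      (f := fun n : ℤ => ‖x n‖^2)).2 sqx
    exact h.congr (fun n => rfl)
  have sP : Summable P := by
    apply Summable.of_nonneg_of_le hP0 (fun n => ?_) (sqx.mul_left (Wb α t N))
    exact mul_le_mul_of_nonneg_right (wc_le_Wb α t N n) (sq_nonneg _)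
  have sP1 : Summable (fun n => P (n+1)) := by
    have h := (Equiv.summable_iff (Equiv.addRight (1:ℤ)) (f := P)).2 sP
    exact h.congr (fun n => rfl)
  -- terms
  set A1 : ℤ → ℝ := fun n => (-(α * ψc N n)) * P n with hA1def
  set G1 : ℤ → ℝ := fun n => wc α t N n * (Complex.I * (conj (x n) * x (n+1))).re with hG1def
  set G2 : ℤ → ℝ := fun n => wc α t N n * (Complex.I * (conj (x n) * x (n-1))).re with hG2def
  set G2c : ℤ → ℝ := fun n => wc α (t) N (n+1) * (Complex.I * (conj (x (n+1)) * x n)).re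
    with hG2cdef
  set G3 : ℤ → ℝ := fun n => wc α t N n * (-(V₂ t n) * ‖x n‖^2) with hG3def
  have sA1 : Summable A1 := by
    apply Summable.of_norm_bounded (sqx.mul_left (α * ψ N * Wb α t N))
    intro n
    rw [Real.norm_eq_abs, hA1def]
    simp only []
    rw [abs_mul, abs_neg, abs_mul, abs_of_pos hα0, abs_of_nonneg (ψc_nonneg N n), hP]
    simp only []
    rw [abs_mul, abs_of_pos (wc_pos α t N n), abs_of_nonneg (sq_nonneg _)]
    calc α * ψc N n * (wc α t N n * ‖x n‖^2)
        ≤ α * ψ N * (Wb α t N * ‖x n‖^2) := by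
          apply mul_le_mul
          · exact mul_le_mul_of_nonneg_left (ψc_le_ψN N n) hα0.le
          · exact mul_le_mul_of_nonneg_right (wc_le_Wb α t N n) (sq_nonneg _)
          · exact mul_nonneg (wc_pos α t N n).le (sq_nonneg _)
          · exact mul_nonneg hα0.le (OSWP2.ψ_nonneg N)
      _ = α * ψ N * Wb α t N * ‖x n‖^2 := by ring
  have habs1 : ∀ (a b : ℂ), |(Complex.I * (conj a * b)).re| ≤ ‖a‖^2 + ‖b‖^2 := by
    intro a b
    rw [re_I_z, abs_neg]
    calc |(conj a * b).im| ≤ ‖a‖ * ‖b‖ := abs_im_le a b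
      _ ≤ ‖a‖^2 + ‖b‖^2 := by nlinarith [sq_nonneg (‖a‖ - ‖b‖), norm_nonneg a, norm_nonneg b]
  have sG1 : Summable G1 := by
    apply Summable.of_norm_bounded ((sqx.add sqx1).mul_left (Wb α t N))
    intro n
    rw [Real.norm_eq_abs, hG1def]
    simp only []
    rw [abs_mul, abs_of_pos (wc_pos α t N n)]
    apply mul_le_mul (wc_le_Wb α t N n) (habs1 _ _) (abs_nonneg _) (Wb_pos α t N).le
  have sG2 : Summable G2 := by
    apply Summable.of_norm_bounded ((sqx.add sqxm1).mul_left (Wb α t N))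
    intro n
    rw [Real.norm_eq_abs, hG2def]
    simp only []
    rw [abs_mul, abs_of_pos (wc_pos α t N n)]
    apply mul_le_mul (wc_le_Wb α t N n) (habs1 _ _) (abs_nonneg _) (Wb_pos α t N).le
  have sG2c : Summable G2c := by
    apply Summable.of_norm_bounded ((sqx1.add sqx).mul_left (Wb α t N))
    intro n
    rw [Real.norm_eq_abs, hG2cdef]
    simp only []
    rw [abs_mul, abs_of_pos (wc_pos α t N (n+1))]
    apply mul_le_mul (wc_le_Wb α t N (n+1)) (habs1 _ _) (abs_nonneg _) (Wb_pos α t N).le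
  have sG3 : Summable G3 := by
    apply Summable.of_norm_bounded (sqx.mul_left (Wb α t N * M))
    intro n
    rw [Real.norm_eq_abs, hG3def]
    simp only []
    rw [abs_mul, abs_of_pos (wc_pos α t N n), abs_mul, abs_neg,
      abs_of_nonneg (sq_nonneg ‖x n‖)]
    calc wc α t N n * (|V₂ t n| * ‖x n‖^2) ≤ Wb α t N * (M * ‖x n‖^2) := by
          apply mul_le_mul (wc_le_Wb α t N n)
          · exact mul_le_mul_of_nonneg_right (hV₂ t n) (sq_nonneg _)
          · positivity
          · exact (Wb_pos α t N).le
      _ = Wb α t N * M * ‖x n‖^2 := by ring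
  -- split of the inner-product term
  have eSplit : ∀ n : ℤ, wc α t N n * (conj (x n) * d n).re = G1 n + G2 n + G3 n := by
    intro n
    rw [hd, hDc t ht n, ← hx]
    rw [re_split (x n) (x (n+1)) (x (n-1)) (V₁ t n) (V₂ t n)]
    rw [hG1def, hG2def, hG3def]
    simp only []
    ring
  have sA2 : Summable (fun n : ℤ => wc α t N n * (conj (x n) * d n).re) := by
    apply Summable.congr ((sG1.add sG2).add sG3)
    intro n
    rw [eSplit n]
  -- the three inner products as tsums
  have eA1 : (⟪x, W' α N t x⟫).re = ∑' n, A1 n := by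
    rw [re_inner_eq]
    apply tsum_congr
    intro n
    rw [W'_apply, re_c_self, hA1def, hP]
    simp only []
    ring
  have eA2 : (⟪x, W α N t d⟫).re = ∑' n, wc α t N n * (conj (x n) * d n).re := by
    rw [re_inner_eq]
    apply tsum_congr
    intro n
    rw [W_apply, re_c_mul]
  have eA3 : (⟪d, W α N t x⟫).re = ∑' n, wc α t N n * (conj (x n) * d n).re := by
    rw [re_inner_eq]
    apply tsum_congr
    intro n
    rw [W_apply, re_c_mul, re_conj_comm]
  -- reindex G2
  have eG2 : ∑' n, G2 n = ∑' n, G2c n := by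
    rw [← Equiv.tsum_eq (Equiv.addRight (1:ℤ)) G2]
    apply tsum_congr
    intro n
    show G2 (n + 1) = G2c n
    rw [hG2def, hG2cdef]
    simp only []
    rw [show n + 1 - 1 = n by ring]
  -- pointwise cross bound
  have hcross : ∀ n : ℤ, 2 * G1 n + 2 * G2c n ≤ gg α N n * P n + gg α N n * P (n+1) := by
    intro n
    have hA := wc_pos α t N n
    set zA : ℝ := α * (2 - t) * ψc N n with hzA
    set zB : ℝ := α * (2 - t) * ψc N (n+1) with hzB
    have hwA : wc α t N n = Real.exp zA := rfl
    have hwB : wc α t N (n+1) = Real.exp zB := rfl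
    have h2t : (1:ℝ) ≤ 2 - t := by rcases ht with ⟨_, h1⟩; linarith
    have h2t' : 2 - t ≤ 2 := by rcases ht with ⟨h0, _⟩; linarith
    have hδ : 0 ≤ ψc N (n+1) - ψc N n := by
      have := ψc_mono N (show n ≤ n + 1 by omega)
      linarith
    have hAB : zA ≤ zB := by
      rw [hzA, hzB]
      apply mul_le_mul_of_nonneg_left _ (by positivity)
      have := ψc_mono N (show n ≤ n + 1 by omega)
      exact this
    have hGle : (zB - zA)/2 ≤ α * (ψc N (n+1) - ψc N n) := by
      rw [hzA, hzB]
      have : α * (2 - t) * ψc N (n+1) - α * (2 - t) * ψc N n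
          = α * (2-t) * (ψc N (n+1) - ψc N n) := by ring
      rw [this]
      nlinarith
    have hG0 : 0 ≤ α * (ψc N (n+1) - ψc N n) := by positivity
    have hz : |(conj (x n) * x (n+1)).im| ≤ ‖x n‖ * ‖x (n+1)‖ := abs_im_le _ _
    have hbd := cross_bound zA zB (α * (ψc N (n+1) - ψc N n)) hAB hGle hG0
      ((conj (x n) * x (n+1)).im) (‖x n‖) (‖x (n+1)‖) (norm_nonneg _) (norm_nonneg _) hz
    have e1 : G1 n = Real.exp zA * (-(conj (x n) * x (n+1)).im) := by
      rw [hG1def]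
      simp only []
      rw [re_I_z, hwA]
    have e2 : G2c n = Real.exp zB * ((conj (x n) * x (n+1)).im) := by
      rw [hG2cdef]
      simp only []
      have hcc : conj (x (n+1)) * x n = conj (conj (x n) * x (n+1)) := by
        rw [map_mul, Complex.conj_conj]
        ring
      rw [hcc, re_I_conj, hwB]
    rw [e1, e2]
    have hgP : gg α N n * P n + gg α N n * P (n+1)
        = Real.exp (α * (ψc N (n+1) - ψc N n))
          * (Real.exp zA * ‖x n‖^2 + Real.exp zB * ‖x (n+1)‖^2) := by
      rw [hP, gg]
      simp only []
      rw [hwA, hwB]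
      ring
    rw [hgP]
    calc 2 * (Real.exp zA * (-(conj (x n) * x (n+1)).im))
          + 2 * (Real.exp zB * ((conj (x n) * x (n+1)).im))
        = 2 * Real.exp zA * (-(conj (x n) * x (n+1)).im)
          + 2 * Real.exp zB * ((conj (x n) * x (n+1)).im) := by ring
      _ ≤ _ := hbd
  -- summabilities for weighted sums
  have hGb : ∀ n : ℤ, gg α N n ≤ Real.exp (α * ψ N) := gg_le α hα0.le N
  have sgP : Summable (fun n => gg α N n * P n) := by
    apply Summable.of_nonneg_of_le (fun n => mul_nonneg (gg_pos α N n).le (hP0 n))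
      (fun n => mul_le_mul_of_nonneg_right (hGb n) (hP0 n)) (sP.mul_left _)
  have sgP1 : Summable (fun n => gg α N n * P (n+1)) := by
    apply Summable.of_nonneg_of_le (fun n => mul_nonneg (gg_pos α N n).le (hP0 _))
      (fun n => mul_le_mul_of_nonneg_right (hGb n) (hP0 _)) (sP1.mul_left _)
  have sgP' : Summable (fun n => gg α N (n-1) * P n) := by
    apply Summable.of_nonneg_of_le (fun n => mul_nonneg (gg_pos α N _).le (hP0 _))
      (fun n => mul_le_mul_of_nonneg_right (hGb _) (hP0 _)) (sP.mul_left _)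
  -- reindex second part of cross bound
  have egP1 : ∑' n, gg α N n * P (n+1) = ∑' n, gg α N (n-1) * P n := by
    rw [← Equiv.tsum_eq (Equiv.subRight (1:ℤ)) (fun n => gg α N n * P (n+1))]
    apply tsum_congr
    intro n
    show gg α N (n - 1) * P (n - 1 + 1) = gg α N (n-1) * P n
    rw [show n - 1 + 1 = n by ring]
  -- assemble
  rw [inner_add_right, Complex.add_re, Complex.add_re, eA1, eA2, eA3]
  set T := ∑' n, wc α t N n * (conj (x n) * d n).re with hT
  have hTsplit : T = (∑' n, G1 n) + (∑' n, G2c n) + (∑' n, G3 n) := by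
    rw [hT, tsum_congr eSplit, Summable.tsum_add (sG1.add sG2) sG3, Summable.tsum_add sG1 sG2, eG2]
  have hS2 : ∑' n, (2*G1 n + 2*G2c n) ≤ (∑' n, gg α N n * P n) + (∑' n, gg α N (n-1) * P n) := by
    rw [← egP1, ← Summable.tsum_add sgP sgP1]
    apply Summable.tsum_le_tsum hcross ((sG1.mul_left 2).add (sG2c.mul_left 2)) (sgP.add sgP1)
  have hS3 : ∑' n, (2 * G3 n) ≤ ∑' n, 2*M*P n := by
    apply Summable.tsum_le_tsum _ (sG3.mul_left 2) (sP.mul_left _)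
    intro n
    rw [hG3def, hP]
    simp only []
    have h1 : -(V₂ t n) ≤ M := by
      have := hV₂ t n
      have := neg_abs_le (V₂ t n)
      linarith
    have h2 : 0 ≤ wc α t N n * ‖x n‖^2 := mul_nonneg (wc_pos α t N n).le (sq_nonneg _)
    nlinarith [wc_pos α t N n, sq_nonneg ‖x n‖]
  have hkey : ∀ n : ℤ, A1 n + (gg α N n * P n + gg α N (n-1) * P n) + 2*M*P n
      ≤ (Kc α + 2*M) * P n := by
    intro n
    have hk := key α hα0 hα1 N n
    have hg1 : gg α N n = Real.exp (α * (ψc N (n+1) - ψc N n)) := rfl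
    have hg2 : gg α N (n-1) = Real.exp (α * (ψc N n - ψc N (n-1))) := by
      rw [gg, show n - 1 + 1 = n by ring]
    have hcoeff : gg α N n + gg α N (n-1) + (-(α * ψc N n)) + 2*M ≤ Kc α + 2*M := by
      rw [hg1, hg2]
      linarith
    have := hP0 n
    rw [hA1def]
    simp only []
    nlinarith [hP0 n]
  have sA1gg : Summable (fun n => A1 n + (gg α N n * P n + gg α N (n-1) * P n) + 2*M*P n) :=
    ((sA1.add (sgP.add sgP')).add (sP.mul_left (2*M)))
  calc (∑' n, A1 n) + T + T
      = (∑' n, A1 n) + ((∑' n, G1 n) + (∑' n, G2c n) + (∑' n, G3 n))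
        + ((∑' n, G1 n) + (∑' n, G2c n) + (∑' n, G3 n)) := by rw [hTsplit]
    _ = (∑' n, A1 n) + (∑' n, (2*G1 n + 2*G2c n)) + (∑' n, 2*G3 n) := by
        rw [Summable.tsum_add (sG1.mul_left 2) (sG2c.mul_left 2), tsum_mul_left, tsum_mul_left,
          tsum_mul_left]
        ring
    _ ≤ (∑' n, A1 n) + ((∑' n, gg α N n * P n) + (∑' n, gg α N (n-1) * P n))
        + (∑' n, 2*M*P n) := by
        have := hS2
        have := hS3
        linarith
    _ = ∑' n, (A1 n + (gg α N n * P n + gg α N (n-1) * P n) + 2*M*P n) := by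
        rw [Summable.tsum_add (sA1.add (sgP.add sgP')) (sP.mul_left (2*M)),
          Summable.tsum_add sA1 (sgP.add sgP'), Summable.tsum_add sgP sgP']
    _ ≤ ∑' n, (Kc α + 2*M) * P n := Summable.tsum_le_tsum hkey sA1gg (sP.mul_left _)
    _ = (Kc α + 2*M) * ∑' n, P n := tsum_mul_left

end OSWP5

namespace OSWP6
open OSWP OSWP2 OSWP3 OSWP4 OSWP5

local notation "⟪" x ", " y "⟫" => @inner ℂ _ _ x y

/-- real-scalar versions of the operators -/
def WR (α : ℝ) (N : ℤ) (t : ℝ) : OSWP.E →L[ℝ] OSWP.E := (W α N t).restrictScalars ℝ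
def W'R (α : ℝ) (N : ℤ) (t : ℝ) : OSWP.E →L[ℝ] OSWP.E := (W' α N t).restrictScalars ℝ

lemma hasDerivWR (α : ℝ) (hα0 : 0 ≤ α) (N : ℤ) {t : ℝ} (ht : t ∈ Set.Icc (0:ℝ) 1) :
    HasDerivWithinAt (fun s => WR α N s) (W'R α N t) (Set.Icc (0:ℝ) 1) t := by
  have h := hasDerivW α hα0 N ht
  rw [hasDerivWithinAt_iff_isLittleO] at h ⊢
  have h2 := h.norm_left
  have h3 : (fun s => ‖WR α N s - WR α N t - (s-t) • W'R α N t‖)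
      = fun s => ‖W α N s - W α N t - (s-t) • W' α N t‖ := by
    funext s
    have heq : WR α N s - WR α N t - (s - t) • W'R α N t
        = ((W α N s - W α N t - (s - t) • W' α N t).restrictScalars ℝ) := rfl
    rw [heq, ContinuousLinearMap.norm_restrictScalars]
  rw [← h3] at h2
  exact Asymptotics.isLittleO_norm_left.1 h2

lemma S_eq (α t : ℝ) (N : ℤ) (x : OSWP.E) :
    (⟪x, WR α N t x⟫).re = ∑' n : ℤ, wc α t N n * ‖x n‖^2 := by
  rw [re_inner_eq]
  apply tsum_congr
  intro n
  rw [show ((WR α N t x) n) = ((wc α t N n : ℝ) : ℂ) * x n from rfl, re_c_self]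

set_option maxHeartbeats 1000000 in
/-- Grönwall bound for the truncated weighted sum. -/
lemma gronwall_S (α M : ℝ) (hα0 : 0 < α) (hα1 : α ≤ 1) (hM : 0 ≤ M)
    (V₁ V₂ : ℝ → ℤ → ℝ) (hV₂ : ∀ t n, |V₂ t n| ≤ M)
    (u : ℝ → OSWP.E) (D : ℝ → OSWP.E)
    (hD : ∀ t ∈ Set.Icc (0:ℝ) 1, HasDerivWithinAt u (D t) (Set.Icc 0 1) t)
    (hDc : ∀ t ∈ Set.Icc (0:ℝ) 1, ∀ n : ℤ,
      (D t) n = Complex.I * (u t (n + 1) + u t (n - 1) - 2 * u t n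
          + ((V₁ t n : ℂ) + Complex.I * (V₂ t n : ℂ)) * u t n))
    (N : ℤ) {t : ℝ} (ht : t ∈ Set.Icc (0:ℝ) 1) :
    ∑' n : ℤ, wc α t N n * ‖u t n‖^2
      ≤ Real.exp ((Kc α + 2*M) * t) * ∑' n : ℤ, wc α 0 N n * ‖u 0 n‖^2 := by
  set K : ℝ := Kc α + 2*M with hK
  set S : ℝ → ℝ := fun s => (⟪u s, WR α N s (u s)⟫).re with hSdef
  set S' : ℝ → ℝ := fun s =>
    (⟪u s, W'R α N s (u s) + WR α N s (D s)⟫ + ⟪D s, WR α N s (u s)⟫).re with hS'def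
  have hS : ∀ s ∈ Set.Icc (0:ℝ) 1, HasDerivWithinAt S (S' s) (Set.Icc 0 1) s := by
    intro s hs
    have h1 := (hasDerivWR α hα0.le N hs).clm_apply (hD s hs)
    have h2 := (hD s hs).inner ℂ h1
    exact Complex.reCLM.hasFDerivAt.comp_hasDerivWithinAt s h2
  have hle : ∀ s ∈ Set.Icc (0:ℝ) 1, S' s ≤ K * S s := by
    intro s hs
    have h := Sprime_le α M hα0 hα1 hM V₁ V₂ hV₂ u D hDc N hs
    rw [hS'def, hSdef]
    simp only []
    rw [S_eq]
    exact h
  have hexp : ∀ s : ℝ, HasDerivAt (fun r => Real.exp (-K*r)) (Real.exp (-K*s) * -K) s := by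
    intro s
    have h0 : HasDerivAt (fun r : ℝ => -K * r) (-K) s := by
      simpa using (hasDerivAt_id s).const_mul (-K)
    exact h0.exp
  set f : ℝ → ℝ := fun s => S s * Real.exp (-K*s) with hfdef
  have hfderiv : ∀ s ∈ Set.Icc (0:ℝ) 1, HasDerivWithinAt f
      (S' s * Real.exp (-K*s) + S s * (Real.exp (-K*s) * -K)) (Set.Icc 0 1) s := by
    intro s hs
    exact (hS s hs).mul (hexp s).hasDerivWithinAt
  have hanti : AntitoneOn f (Set.Icc 0 1) := by
    apply antitoneOn_of_deriv_nonpos (convex_Icc 0 1)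
    · intro s hs
      exact (hfderiv s hs).continuousWithinAt
    · rw [interior_Icc]
      intro s hs
      exact (((hfderiv s (Set.Ioo_subset_Icc_self hs)).hasDerivAt
        (Icc_mem_nhds hs.1 hs.2)).differentiableAt).differentiableWithinAt
    · intro s hs
      rw [interior_Icc] at hs
      have hda := (hfderiv s (Set.Ioo_subset_Icc_self hs)).hasDerivAt
        (Icc_mem_nhds hs.1 hs.2)
      rw [hda.deriv]
      have h1 := hle s (Set.Ioo_subset_Icc_self hs)
      have he := Real.exp_pos (-K*s)
      have h2 : (S' s - K * S s) * Real.exp (-K*s) ≤ 0 :=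
        mul_nonpos_of_nonpos_of_nonneg (by linarith) he.le
      nlinarith
  have h0m : (0:ℝ) ∈ Set.Icc (0:ℝ) 1 := by constructor <;> norm_num
  have hft : f t ≤ f 0 := hanti h0m ht ht.1
  have hf0 : f 0 = S 0 := by
    rw [hfdef]
    simp
  have hfin : S t ≤ Real.exp (K * t) * S 0 := by
    have h3 := mul_le_mul_of_nonneg_right hft (Real.exp_pos (K*t)).le
    have h4 : f t * Real.exp (K*t) = S t := by
      rw [hfdef]
      simp only []
      rw [mul_assoc, ← Real.exp_add, show -K*t + K*t = 0 by ring, Real.exp_zero, mul_one]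
    calc S t = f t * Real.exp (K*t) := h4.symm
      _ ≤ f 0 * Real.exp (K*t) := h3
      _ = Real.exp (K*t) * S 0 := by rw [hf0]; ring
  rw [← S_eq α t N (u t), ← S_eq α 0 N (u 0)]
  exact hfin

end OSWP6

namespace OSWP7
open OSWP OSWP2 OSWP3 OSWP4 OSWP5 OSWP6

lemma nat_cast_inj : Function.Injective (fun n : ℕ => (n : ℤ) + 1) := by
  intro a b h
  simp only [] at h
  omega

lemma rpow_eq_exp_psi (α : ℝ) (n : ℕ) :
    ((n : ℝ) + 1) ^ (α * ((n : ℝ) + 1)) = Real.exp (α * ψ ((n : ℤ) + 1)) := by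
  have hpos : (0:ℝ) < (n : ℝ) + 1 := by positivity
  rw [Real.rpow_def_of_pos hpos]
  congr 1
  have h1 : ψ ((n : ℤ) + 1) = (((n : ℤ) + 1 : ℤ) : ℝ) * Real.log (((n : ℤ) + 1 : ℤ) : ℝ) := by
    unfold ψ
    rw [if_pos (by omega : (1:ℤ) ≤ (n : ℤ) + 1)]
  rw [h1]
  push_cast
  ring

set_option maxHeartbeats 1600000 in
theorem one_sided_weight_propagation'
    (α M : ℝ) (hα : α ≤ 1)
    (V₁ V₂ : ℝ → ℤ → ℝ) (hV₂ : ∀ t n, |V₂ t n| ≤ M)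
    (u : ℝ → lp (fun _ : ℤ => ℂ) 2)
    (hC1 : ContDiffOn ℝ 1 u (Set.Icc 0 1))
    (heq : ∀ t ∈ Set.Icc (0 : ℝ) 1, ∀ n : ℤ,
      HasDerivWithinAt (fun s : ℝ => u s n)
        (Complex.I * (u t (n + 1) + u t (n - 1) - 2 * u t n
          + ((V₁ t n : ℂ) + Complex.I * (V₂ t n : ℂ)) * u t n))
        (Set.Icc 0 1) t)
    (h0 : ∑' n : ℕ, ENNReal.ofReal
        (((n : ℝ) + 1) ^ (2 * α * ((n : ℝ) + 1)) * ‖u 0 ((n : ℤ) + 1)‖ ^ 2) < ⊤) :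
    ∀ t ∈ Set.Icc (0 : ℝ) 1,
      ∑' n : ℕ, ENNReal.ofReal
        (((n : ℝ) + 1) ^ (α * ((n : ℝ) + 1)) * ‖u t ((n : ℤ) + 1)‖ ^ 2) < ⊤ := by
  intro t ht
  have hM0 : 0 ≤ M := le_trans (abs_nonneg _) (hV₂ 0 0)
  rcases le_or_gt α 0 with hα0 | hα0
  · -- easy case : weights are at most 1
    have hsq : Summable (fun n : ℕ => ‖u t ((n:ℤ)+1)‖^2) := by
      have h := (summable_sq (u t)).comp_injective nat_cast_inj
      exact h.congr (fun n => rfl)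
    have hterm : ∀ n : ℕ, ((n : ℝ) + 1) ^ (α * ((n : ℝ) + 1)) * ‖u t ((n : ℤ) + 1)‖ ^ 2
        ≤ ‖u t ((n:ℤ)+1)‖^2 := by
      intro n
      have h1 : ((n : ℝ) + 1) ^ (α * ((n : ℝ) + 1)) ≤ 1 := by
        apply Real.rpow_le_one_of_one_le_of_nonpos (by push_cast; linarith [Nat.cast_nonneg (α := ℝ) n])
        apply mul_nonpos_of_nonpos_of_nonneg hα0 (by positivity)
      exact mul_le_of_le_one_left (sq_nonneg _) h1
    calc ∑' n : ℕ, ENNReal.ofReal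
          (((n : ℝ) + 1) ^ (α * ((n : ℝ) + 1)) * ‖u t ((n : ℤ) + 1)‖ ^ 2)
        ≤ ∑' n : ℕ, ENNReal.ofReal (‖u t ((n:ℤ)+1)‖^2) :=
          ENNReal.tsum_le_tsum (fun n => ENNReal.ofReal_le_ofReal (hterm n))
      _ = ENNReal.ofReal (∑' n : ℕ, ‖u t ((n:ℤ)+1)‖^2) :=
          (ENNReal.ofReal_tsum_of_nonneg (fun n => sq_nonneg _) hsq).symm
      _ < ⊤ := ENNReal.ofReal_lt_top
  · -- main case
    set D : ℝ → OSWP.E := fun s => derivWithin u (Set.Icc 0 1) s with hDdef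
    have hD : ∀ s ∈ Set.Icc (0:ℝ) 1, HasDerivWithinAt u (D s) (Set.Icc 0 1) s :=
      fun s hs => ((hC1.differentiableOn one_ne_zero) s hs).hasDerivWithinAt
    have hDc : ∀ s ∈ Set.Icc (0:ℝ) 1, ∀ n : ℤ,
        (D s) n = Complex.I * (u s (n + 1) + u s (n - 1) - 2 * u s n
          + ((V₁ s n : ℂ) + Complex.I * (V₂ s n : ℂ)) * u s n) := by
      intro s hs n
      have hu : UniqueDiffWithinAt ℝ (Set.Icc (0:ℝ) 1) s := (uniqueDiffOn_Icc one_pos) s hs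
      have h1 : HasDerivWithinAt (fun r => ((evalCLM n).restrictScalars ℝ) (u r))
          (((evalCLM n).restrictScalars ℝ) (D s)) (Set.Icc 0 1) s :=
        ((evalCLM n).restrictScalars ℝ).hasFDerivAt.comp_hasDerivWithinAt s (hD s hs)
      have h2 := heq s hs n
      exact (h1.derivWithin hu).symm.trans (h2.derivWithin hu)
    set K : ℝ := Kc α + 2*M with hK
    have hK9 : 9 ≤ K := by
      have := Kc_pos α
      rw [hK]; linarith
    -- summable weighted initial data over ℤ
    have h0' : Summable (fun n : ℕ =>
        ((n : ℝ) + 1) ^ (2 * α * ((n : ℝ) + 1)) * ‖u 0 ((n : ℤ) + 1)‖ ^ 2) := by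
      have h := ENNReal.summable_toReal h0.ne
      apply h.congr
      intro n
      rw [ENNReal.toReal_ofReal (by positivity)]
    set C0f : ℤ → ℝ := fun n => Real.exp (2*α*ψ n) * ‖u 0 n‖^2 with hC0f
    have hC0pos : ∀ n, 0 ≤ C0f n := fun n => by
      rw [hC0f]; positivity
    have hsum0 : Summable C0f := by
      apply Summable.of_nat_of_neg_add_one
      · -- positive side
        apply (summable_nat_add_iff 1).1
        apply h0'.congr
        intro n
        rw [hC0f]
        simp only []
        have hc : (((n + 1 : ℕ) : ℤ) : ℤ) = (n : ℤ) + 1 := by push_cast; ring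
        rw [show ((n + 1 : ℕ) : ℤ) = (n : ℤ) + 1 by push_cast; ring]
        congr 1
        rw [rpow_eq_exp_psi (2*α) n]
      · -- negative side
        have hinj : Function.Injective (fun n : ℕ => (-((n : ℤ) + 1) : ℤ)) := by
          intro a b h
          simp only [] at h
          omega
        have h := (summable_sq (u 0)).comp_injective hinj
        apply h.congr
        intro n
        rw [hC0f]
        simp only [Function.comp_apply]
        rw [ψ_eq_zero (by omega : (-((n:ℤ)+1) : ℤ) ≤ 1)]
        simp
    set C0 : ℝ := ∑' n : ℤ, C0f n with hC0
    have hC0nn : 0 ≤ C0 := tsum_nonneg hC0pos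
    -- uniform bound on initial truncated sums
    have hS0 : ∀ N : ℤ, ∑' n : ℤ, wc α 0 N n * ‖u 0 n‖^2 ≤ C0 := by
      intro N
      apply Summable.tsum_le_tsum _ _ hsum0
      · intro n
        rw [hC0f]
        simp only []
        apply mul_le_mul_of_nonneg_right _ (sq_nonneg _)
        rw [wc]
        apply Real.exp_le_exp.2
        have h1 := ψc_le_ψ N n
        have h2 := ψc_nonneg N n
        nlinarith
      · apply Summable.of_nonneg_of_le
          (fun n => mul_nonneg (wc_pos α 0 N n).le (sq_nonneg _)) _ hsum0
        intro n
        rw [hC0f]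
        simp only []
        apply mul_le_mul_of_nonneg_right _ (sq_nonneg _)
        rw [wc]
        apply Real.exp_le_exp.2
        have h1 := ψc_le_ψ N n
        have h2 := ψc_nonneg N n
        nlinarith
    -- the master bound, uniform in N
    have hmaster : ∀ N : ℤ, ∑' n : ℤ, wc α t N n * ‖u t n‖^2 ≤ Real.exp K * C0 := by
      intro N
      have hG := gronwall_S α M hα0 hα hM0 V₁ V₂ hV₂ u D hD hDc N ht
      have hexp : Real.exp ((Kc α + 2*M) * t) ≤ Real.exp K := by
        apply Real.exp_le_exp.2
        rw [hK]
        rcases ht with ⟨ht0, ht1⟩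
        nlinarith
      calc ∑' n : ℤ, wc α t N n * ‖u t n‖^2
          ≤ Real.exp ((Kc α + 2*M) * t) * ∑' n : ℤ, wc α 0 N n * ‖u 0 n‖^2 := hG
        _ ≤ Real.exp K * C0 := by
            apply mul_le_mul hexp (hS0 N) _ (Real.exp_pos K).le
            apply tsum_nonneg (fun n => mul_nonneg (wc_pos α 0 N n).le (sq_nonneg _))
    -- conclude
    rw [ENNReal.tsum_eq_iSup_sum]
    have hfin : ENNReal.ofReal (Real.exp K * C0) < ⊤ := ENNReal.ofReal_lt_top
    refine lt_of_le_of_lt (iSup_le fun F => ?_) hfin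
    rw [← ENNReal.ofReal_sum_of_nonneg (fun n _ => by positivity)]
    apply ENNReal.ofReal_le_ofReal
    set N : ℤ := ((F.sup id : ℕ) : ℤ) + 1 with hN
    have hsumN : Summable (fun n : ℕ => wc α t N ((n:ℤ)+1) * ‖u t ((n:ℤ)+1)‖^2) := by
      have hs : Summable (fun n : ℤ => wc α t N n * ‖u t n‖^2) := by
        apply Summable.of_nonneg_of_le
          (fun n => mul_nonneg (wc_pos α t N n).le (sq_nonneg _))
          (fun n => mul_le_mul_of_nonneg_right (wc_le_Wb α t N n) (sq_nonneg _))
          ((summable_sq (u t)).mul_left _)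
      exact (hs.comp_injective nat_cast_inj).congr (fun n => rfl)
    have hptF : ∀ n ∈ F, ((n : ℝ) + 1) ^ (α * ((n : ℝ) + 1)) * ‖u t ((n : ℤ) + 1)‖ ^ 2
        ≤ wc α t N ((n:ℤ)+1) * ‖u t ((n:ℤ)+1)‖^2 := by
      intro n hnF
      apply mul_le_mul_of_nonneg_right _ (sq_nonneg _)
      rw [rpow_eq_exp_psi α n, wc]
      apply Real.exp_le_exp.2
      have hle : (n : ℤ) + 1 ≤ N := by
        rw [hN]
        have h := Finset.le_sup (f := id) hnF
        simp only [id] at h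
        omega
      have hcap : ψc N ((n:ℤ)+1) = ψ ((n:ℤ)+1) := by
        rw [ψc, min_eq_left hle]
      rw [hcap]
      have h1 : 0 ≤ ψ ((n:ℤ)+1) := OSWP2.ψ_nonneg _
      rcases ht with ⟨ht0, ht1⟩
      have h2 : 0 ≤ α * (1 - t) * ψ ((n:ℤ)+1) :=
        mul_nonneg (mul_nonneg hα0.le (by linarith)) h1
      have h3 : α * (2-t) * ψ ((n:ℤ)+1) = α * ψ ((n:ℤ)+1) + α * (1-t) * ψ ((n:ℤ)+1) := by
        ring
      linarith
    calc ∑ n ∈ F, ((n : ℝ) + 1) ^ (α * ((n : ℝ) + 1)) * ‖u t ((n : ℤ) + 1)‖ ^ 2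
        ≤ ∑ n ∈ F, wc α t N ((n:ℤ)+1) * ‖u t ((n:ℤ)+1)‖^2 := Finset.sum_le_sum hptF
      _ ≤ ∑' n : ℕ, wc α t N ((n:ℤ)+1) * ‖u t ((n:ℤ)+1)‖^2 := by
          apply Summable.sum_le_tsum F (fun n _ => mul_nonneg (wc_pos α t N _).le (sq_nonneg _)) hsumN
      _ ≤ ∑' n : ℤ, wc α t N n * ‖u t n‖^2 := by
          refine Summable.tsum_le_tsum_of_inj (fun n : ℕ => (n:ℤ)+1) nat_cast_inj
            (fun c _ => mul_nonneg (wc_pos α t N _).le (sq_nonneg _))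
            (fun n => ?_) hsumN ?_
          · exact le_refl _
          · apply Summable.of_nonneg_of_le
              (fun n => mul_nonneg (wc_pos α t N n).le (sq_nonneg _))
              (fun n => mul_le_mul_of_nonneg_right (wc_le_Wb α t N n) (sq_nonneg _))
              ((summable_sq (u t)).mul_left _)
      _ ≤ Real.exp K * C0 := hmaster N

end OSWP7

/-- If `u ∈ C¹([0,1], ℓ²(ℤ))` solves `∂_t u = i(Δ_d u + Vu)` with
`V = V₁ + iV₂`, `V₂` bounded, and `Σ_{n>0} n^{2αn}|u(0,n)|² < ∞` for some `α ≤ 1`, then for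
each `t ∈ [0,1]` one has `Σ_{n>0} n^{αn}|u(t,n)|² < ∞`. -/
theorem one_sided_weight_propagation
    (α M : ℝ) (hα : α ≤ 1)
    (V₁ V₂ : ℝ → ℤ → ℝ) (hV₂ : ∀ t n, |V₂ t n| ≤ M)
    (u : ℝ → lp (fun _ : ℤ => ℂ) 2)
    (hC1 : ContDiffOn ℝ 1 u (Set.Icc 0 1))
    (heq : ∀ t ∈ Set.Icc (0 : ℝ) 1, ∀ n : ℤ,
      HasDerivWithinAt (fun s : ℝ => u s n)
        (Complex.I * (u t (n + 1) + u t (n - 1) - 2 * u t n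
          + ((V₁ t n : ℂ) + Complex.I * (V₂ t n : ℂ)) * u t n))
        (Set.Icc 0 1) t)
    (h0 : ∑' n : ℕ, ENNReal.ofReal
        (((n : ℝ) + 1) ^ (2 * α * ((n : ℝ) + 1)) * ‖u 0 ((n : ℤ) + 1)‖ ^ 2) < ⊤) :
    ∀ t ∈ Set.Icc (0 : ℝ) 1,
      ∑' n : ℕ, ENNReal.ofReal
        (((n : ℝ) + 1) ^ (α * ((n : ℝ) + 1)) * ‖u t ((n : ℤ) + 1)‖ ^ 2) < ⊤ := by
  exact OSWP7.one_sided_weight_propagation' α M hα V₁ V₂ hV₂ u hC1 heq h0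
end
end

section
/- Let 0 < α ≤ 1 and define κ(t,n) = α·|n|·ln(1+|n|)/(1+t) and ψ(t,n) = e^{κ(t,n)} for t ∈ [0,1], n ∈ ℤ. Set a(t,n) = ψ(t,n+1)/ψ(t,n) - ψ(t,n)/ψ(t,n+1). Then |a(t,n)| ≤ e^α·(1+|n|)^α for all t ∈ [0,1] and n ∈ ℤ, and there exists a constant C ≥ 0 (depending only on α) such that 2·∂_t κ(t,n) + |a(t,n)| + |a(t,n-1)| ≤ 2C for all t ∈ [0,1] and all n ∈ ℤ. -/
noncomputable section

/-- `κ(t,n) = α·|n|·ln(1+|n|)/(1+t)`. -/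
def kappaE (α t : ℝ) (n : ℤ) : ℝ := α * |(n : ℝ)| * Real.log (1 + |(n : ℝ)|) / (1 + t)

/-- `ψ(t,n) = e^{κ(t,n)}`. -/
def psiE (α t : ℝ) (n : ℤ) : ℝ := Real.exp (kappaE α t n)

/-- `a(t,n) = ψ(t,n+1)/ψ(t,n) - ψ(t,n)/ψ(t,n+1)`. -/
def aE (α t : ℝ) (n : ℤ) : ℝ := psiE α t (n + 1) / psiE α t n - psiE α t n / psiE α t (n + 1)

namespace WCBaux

lemma log_step (x : ℝ) (hx : 0 ≤ x) :
    Real.log (1 + (x + 1)) ≤ Real.log (1 + x) + 1 / (1 + x) := by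
  have hx1 : (0 : ℝ) < 1 + x := by linarith
  have h2 : (0 : ℝ) < (1 + (x + 1)) / (1 + x) := by positivity
  have := Real.log_le_sub_one_of_pos h2
  rw [Real.log_div (by linarith) (ne_of_gt hx1)] at this
  have hdiv : (1 + (x + 1)) / (1 + x) - 1 = 1 / (1 + x) := by
    field_simp
    ring
  linarith [this, hdiv ▸ this]

lemma f_step (x : ℝ) (hx : 0 ≤ x) :
    (x + 1) * Real.log (1 + (x + 1)) - x * Real.log (1 + x)
      ≤ 1 + Real.log (1 + x) := by
  have hx1 : (0 : ℝ) < 1 + x := by linarith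
  have h := log_step x hx
  have h2 : (x + 1) * Real.log (1 + (x + 1))
      ≤ (x + 1) * (Real.log (1 + x) + 1 / (1 + x)) := by
    apply mul_le_mul_of_nonneg_left h (by linarith)
  have h3 : (x + 1) * (Real.log (1 + x) + 1 / (1 + x))
      = (x + 1) * Real.log (1 + x) + 1 := by
    field_simp; ring
  nlinarith

lemma f_nonneg_step (x : ℝ) (hx : 0 ≤ x) :
    0 ≤ (x + 1) * Real.log (1 + (x + 1)) - x * Real.log (1 + x) := by
  have h1 : Real.log (1 + x) ≤ Real.log (1 + (x + 1)) :=
    Real.log_le_log (by linarith) (by linarith)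
  have h0 : 0 ≤ Real.log (1 + x) := Real.log_nonneg (by linarith)
  nlinarith

/-- The discrete difference bound: `|f(|n+1|) - f(|n|)| ≤ 1 + log(1+|n|)`. -/
lemma diff_abs (n : ℤ) :
    |(|((n + 1 : ℤ) : ℝ)| * Real.log (1 + |((n + 1 : ℤ) : ℝ)|)
      - |(n : ℝ)| * Real.log (1 + |(n : ℝ)|))| ≤ 1 + Real.log (1 + |(n : ℝ)|) := by
  have hb : 0 ≤ 1 + Real.log (1 + |(n : ℝ)|) := by
    have := Real.log_nonneg (by linarith [abs_nonneg ((n:ℝ))] : (1 : ℝ) ≤ 1 + |(n : ℝ)|)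
    linarith
  rcases le_or_gt 0 n with hn | hn
  · -- n ≥ 0 : |n+1| = |n| + 1
    have h1 : |((n + 1 : ℤ) : ℝ)| = |(n : ℝ)| + 1 := by
      rw [abs_of_nonneg (by exact_mod_cast hn : (0:ℝ) ≤ (n:ℝ)),
        abs_of_nonneg (by push_cast; exact_mod_cast by linarith : (0:ℝ) ≤ ((n+1:ℤ):ℝ))]
      push_cast; ring
    rw [h1]
    have h2 := f_step |(n : ℝ)| (abs_nonneg _)
    have h3 := f_nonneg_step |(n : ℝ)| (abs_nonneg _)
    rw [abs_le]
    constructor <;> linarith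
  · -- n ≤ -1 : |n| = |n+1| + 1
    have hn1 : n + 1 ≤ 0 := by omega
    have h1 : |(n : ℝ)| = |((n + 1 : ℤ) : ℝ)| + 1 := by
      rw [abs_of_nonpos (by exact_mod_cast hn.le : (n:ℝ) ≤ 0),
        abs_of_nonpos (by exact_mod_cast hn1 : ((n+1:ℤ):ℝ) ≤ 0)]
      push_cast; ring
    set y := |((n + 1 : ℤ) : ℝ)| with hy
    have hy0 : 0 ≤ y := abs_nonneg _
    rw [h1]
    have h2 := f_step y hy0
    have h3 := f_nonneg_step y hy0
    have h4 : Real.log (1 + y) ≤ Real.log (1 + (y + 1)) :=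
      Real.log_le_log (by linarith) (by linarith)
    rw [abs_le]
    constructor <;> nlinarith

/-- Key pointwise bound on `|a|` in exponential form. -/
lemma abs_aE_le (α : ℝ) (hα0 : 0 < α) (t : ℝ) (ht : t ∈ Set.Icc (0 : ℝ) 1) (n : ℤ) :
    |aE α t n| ≤ Real.exp (α * (1 + Real.log (1 + |(n : ℝ)|))) := by
  obtain ⟨ht0, ht1⟩ := ht
  set d : ℝ := kappaE α t (n + 1) - kappaE α t n with hd
  have ha : aE α t n = Real.exp d - Real.exp (-d) := by
    simp only [aE, psiE, hd, ← Real.exp_sub, neg_sub]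
  have hdb : |d| ≤ α * (1 + Real.log (1 + |(n : ℝ)|)) := by
    have h1t : (0 : ℝ) < 1 + t := by linarith
    have hdval : d = (α / (1 + t)) *
        (|((n + 1 : ℤ) : ℝ)| * Real.log (1 + |((n + 1 : ℤ) : ℝ)|)
          - |(n : ℝ)| * Real.log (1 + |(n : ℝ)|)) := by
      simp only [hd, kappaE]
      field_simp
    rw [hdval, abs_mul]
    have hcoef : |α / (1 + t)| ≤ α := by
      rw [abs_of_nonneg (by positivity)]
      rw [div_le_iff₀ h1t]
      nlinarith
    have hdiff := diff_abs n
    have hb : 0 ≤ 1 + Real.log (1 + |(n : ℝ)|) := by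
      have := Real.log_nonneg (by linarith [abs_nonneg ((n:ℝ))] : (1 : ℝ) ≤ 1 + |(n : ℝ)|)
      linarith
    exact mul_le_mul hcoef hdiff (abs_nonneg _) hα0.le
  rw [ha]
  have h1 : Real.exp d ≤ Real.exp |d| := Real.exp_le_exp.mpr (le_abs_self d)
  have h2 : Real.exp (-d) ≤ Real.exp |d| := Real.exp_le_exp.mpr (neg_le_abs d)
  have h3 : 0 < Real.exp d := Real.exp_pos d
  have h4 : 0 < Real.exp (-d) := Real.exp_pos (-d)
  have h5 : Real.exp |d| ≤ Real.exp (α * (1 + Real.log (1 + |(n : ℝ)|))) :=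
    Real.exp_le_exp.mpr hdb
  rw [abs_le]
  constructor <;> linarith

end WCBaux

/-- For `0 < α ≤ 1`: `|a(t,n)| ≤ e^α (1+|n|)^α`, and there is `C ≥ 0`
(depending only on `α`) with `2∂_tκ(t,n) + |a(t,n)| + |a(t,n-1)| ≤ 2C` for all `t ∈ [0,1]`,
`n ∈ ℤ`, where `∂_tκ(t,n) = -α·|n|·ln(1+|n|)/(1+t)²`. -/
theorem weight_coefficient_bounds (α : ℝ) (hα0 : 0 < α) (hα1 : α ≤ 1) :
    (∀ t ∈ Set.Icc (0 : ℝ) 1, ∀ n : ℤ,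
      |aE α t n| ≤ Real.exp α * (1 + |(n : ℝ)|) ^ α) ∧
    ∃ C : ℝ, 0 ≤ C ∧ ∀ t ∈ Set.Icc (0 : ℝ) 1, ∀ n : ℤ,
      2 * (-(α * |(n : ℝ)| * Real.log (1 + |(n : ℝ)|)) / (1 + t) ^ 2)
        + |aE α t n| + |aE α t (n - 1)| ≤ 2 * C := by
  have key : ∀ t ∈ Set.Icc (0 : ℝ) 1, ∀ n : ℤ,
      |aE α t n| ≤ Real.exp α * (1 + |(n : ℝ)|) ^ α := by
    intro t ht n
    have h := WCBaux.abs_aE_le α hα0 t ht n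
    have hpos : (0 : ℝ) < 1 + |(n : ℝ)| := by positivity
    have heq : Real.exp (α * (1 + Real.log (1 + |(n : ℝ)|)))
        = Real.exp α * (1 + |(n : ℝ)|) ^ α := by
      rw [Real.rpow_def_of_pos hpos, ← Real.exp_add]
      ring_nf
    rw [heq] at h
    exact h
  refine ⟨key, ?_⟩
  set e : ℝ := Real.exp 1 with he
  have he0 : 0 < e := Real.exp_pos 1
  refine ⟨3 * e + 2 * e * Real.exp (4 * e / α), by positivity, ?_⟩
  intro t ht n
  obtain ⟨ht0, ht1⟩ := ht
  set x : ℝ := |(n : ℝ)| with hx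
  have hx0 : 0 ≤ x := abs_nonneg _
  set L : ℝ := Real.log (1 + x) with hL
  have hL0 : 0 ≤ L := Real.log_nonneg (by linarith)
  -- bound on |a(t,n)|
  have rpow_lin : ∀ y : ℝ, 0 ≤ y → Real.exp α * (1 + y) ^ α ≤ e * (1 + y) := by
    intro y hy
    have h1 : (1 : ℝ) ≤ 1 + y := by linarith
    have h2 : (1 + y) ^ α ≤ (1 + y) ^ (1 : ℝ) :=
      Real.rpow_le_rpow_of_exponent_le h1 hα1
    rw [Real.rpow_one] at h2
    have h3 : Real.exp α ≤ e := Real.exp_le_exp.mpr hα1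
    have h4 : 0 < (1 + y) ^ α := Real.rpow_pos_of_pos (by linarith) α
    nlinarith
  have hAn : |aE α t n| ≤ e * (1 + x) :=
    le_trans (key t ⟨ht0, ht1⟩ n) (rpow_lin x hx0)
  have hAn1 : |aE α t (n - 1)| ≤ e * (2 + x) := by
    have h1 := key t ⟨ht0, ht1⟩ (n - 1)
    have h2 := rpow_lin |((n - 1 : ℤ) : ℝ)| (abs_nonneg _)
    have h3 : |((n - 1 : ℤ) : ℝ)| ≤ 1 + x := by
      push_cast
      calc |(n : ℝ) - 1| ≤ |(n : ℝ)| + |(1 : ℝ)| := abs_sub _ _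
        _ = 1 + x := by rw [abs_one]; ring
    have : e * (1 + |((n - 1 : ℤ) : ℝ)|) ≤ e * (2 + x) := by nlinarith
    linarith
  -- bound on the derivative term
  have hderiv : 2 * (-(α * x * L) / (1 + t) ^ 2) ≤ -(α / 2) * x * L := by
    have hnum : 0 ≤ α * x * L := by positivity
    have hsq : (0 : ℝ) < (1 + t) ^ 2 := by nlinarith
    have h4 : (1 + t) ^ 2 ≤ 4 := by nlinarith
    have : α * x * L / 4 ≤ α * x * L / (1 + t) ^ 2 :=
      div_le_div_of_nonneg_left hnum hsq h4
    have hneg : -(α * x * L / (1 + t) ^ 2) ≤ -(α * x * L / 4) := by linarith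
    calc 2 * (-(α * x * L) / (1 + t) ^ 2) = 2 * (-(α * x * L / (1 + t) ^ 2)) := by
          ring
      _ ≤ 2 * (-(α * x * L / 4)) := by linarith
      _ = -(α / 2) * x * L := by ring
  have hC : -(α / 2) * x * L + e * (1 + x) + e * (2 + x)
      ≤ 2 * (3 * e + 2 * e * Real.exp (4 * e / α)) := by
    rcases le_or_gt (4 * e / α) L with hcase | hcase
    · -- large x : derivative term dominates
      have h1 : 2 * e * x ≤ (α / 2) * x * L := by
        have h2 : 4 * e ≤ α * L := by
          rw [div_le_iff₀ hα0] at hcase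
          linarith [mul_comm L α]
        nlinarith
      have hexp : 0 < Real.exp (4 * e / α) := Real.exp_pos _
      nlinarith
    · -- small x
      have hxb : x < Real.exp (4 * e / α) := by
        have : 1 + x < Real.exp (4 * e / α) := by
          calc 1 + x = Real.exp L := by rw [hL, Real.exp_log (by linarith)]
            _ < Real.exp (4 * e / α) := Real.exp_lt_exp.mpr hcase
        linarith
      nlinarith [mul_nonneg (mul_nonneg (by linarith : (0:ℝ) ≤ α / 2) hx0) hL0]
  calc 2 * (-(α * x * L) / (1 + t) ^ 2) + |aE α t n| + |aE α t (n - 1)|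
      ≤ -(α / 2) * x * L + e * (1 + x) + e * (2 + x) := by linarith
    _ ≤ 2 * (3 * e + 2 * e * Real.exp (4 * e / α)) := hC
end
end

section
/- Let γ > 3/2 and ε > 0. Then there exists a constant C₁ ≥ 0 (depending only on γ and ε) such that for all R₀ ≥ 1 and all M > 0: ε·γ·e^{2γ}·M^{2γ-3} - 4R₀γ(1 + ln M) ≥ -(4γ/(2γ-3))·R₀·ln R₀ - C₁·R₀. -/
noncomputable section

/-- For `γ > 3/2` and `ε > 0` there is `C₁ ≥ 0` (depending only on `γ, ε`)
such that for all `R₀ ≥ 1` and `M > 0`: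
`ε γ e^{2γ} M^{2γ-3} - 4R₀γ(1+ln M) ≥ -(4γ/(2γ-3)) R₀ ln R₀ - C₁ R₀`. -/
theorem rho_lower_bound (γ ε : ℝ) (hγ : 3 / 2 < γ) (hε : 0 < ε) :
    ∃ C₁ : ℝ, 0 ≤ C₁ ∧ ∀ R₀ M : ℝ, 1 ≤ R₀ → 0 < M →
      -(4 * γ / (2 * γ - 3)) * R₀ * Real.log R₀ - C₁ * R₀ ≤
        ε * γ * Real.exp (2 * γ) * M ^ (2 * γ - 3) - 4 * R₀ * γ * (1 + Real.log M) := by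
  have ha : (0:ℝ) < 2 * γ - 3 := by linarith
  have hγ0 : (0:ℝ) < γ := by linarith
  set a : ℝ := 2 * γ - 3 with ha_def
  set E : ℝ := Real.exp (2 * γ) with hE_def
  have hEpos : 0 < E := Real.exp_pos _
  refine ⟨|4 * γ + (4 * γ / a) * (Real.log 4 - Real.log (ε * E * a))|, abs_nonneg _, ?_⟩
  set K : ℝ := 4 * γ + (4 * γ / a) * (Real.log 4 - Real.log (ε * E * a)) with hK_def
  have hKle : K ≤ |K| := le_abs_self K
  clear_value K
  intro R₀ M hR hM
  have hR0 : (0:ℝ) < R₀ := by linarith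
  have hden : (0:ℝ) < ε * E * a := by positivity
  set c : ℝ := 4 * R₀ / (ε * E * a) with hc_def
  have hcpos : (0:ℝ) < c := by positivity
  have hMa : (0:ℝ) < M ^ a := Real.rpow_pos_of_pos hM a
  have key : Real.log (M ^ a / c) ≤ M ^ a / c - 1 :=
    Real.log_le_sub_one_of_pos (by positivity)
  rw [Real.log_div (ne_of_gt hMa) (ne_of_gt hcpos), Real.log_rpow hM] at key
  have hlogc : Real.log c = Real.log 4 + Real.log R₀ - Real.log (ε * E * a) := by
    rw [hc_def, Real.log_div (by positivity) (ne_of_gt hden),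
      Real.log_mul (by norm_num) (ne_of_gt hR0)]
  have hcoef : (0:ℝ) < 4 * R₀ * γ / a := by positivity
  have key2 := mul_le_mul_of_nonneg_left key hcoef.le
  have hid : (4 * R₀ * γ / a) * (M ^ a / c - 1) =
      ε * γ * E * M ^ a - 4 * R₀ * γ / a := by
    rw [hc_def]; field_simp
  have hid2 : (4 * R₀ * γ / a) * (a * Real.log M - Real.log c) =
      4 * R₀ * γ * Real.log M
        - (4 * γ / a) * R₀ * (Real.log 4 - Real.log (ε * E * a))
        - (4 * γ / a) * R₀ * Real.log R₀ := by
    rw [hlogc]; field_simp; ring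
  rw [hid, hid2] at key2
  -- key2 : 4R₀γ log M - (4γ/a)R₀ D - (4γ/a)R₀ log R₀ ≤ εγE M^a - 4R₀γ/a
  have hfrac : (0:ℝ) < 4 * γ / a := by positivity
  have h1 : 0 ≤ |K| - K + 4 * γ / a := by linarith
  have hnn : 0 ≤ (|K| - K + 4 * γ / a) * R₀ := mul_nonneg h1 hR0.le
  have hKR : K * R₀ = 4 * γ * R₀ + (4 * γ / a) * R₀ * (Real.log 4 - Real.log (ε * E * a)) := by
    rw [hK_def]; ring
  have hexp : (|K| - K + 4 * γ / a) * R₀ = |K| * R₀ - K * R₀ + (4 * γ / a) * R₀ := by ring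
  rw [hexp, hKR] at hnn
  have hfracR : (0:ℝ) ≤ 4 * R₀ * γ / a := hcoef.le
  have hfa : 4 * R₀ * γ / a = (4 * γ / a) * R₀ := by ring
  linarith [key2, hnn]
end
end

section
/- Let C ≥ 0 and let H : [0,1] → (0,∞) be continuous, twice differentiable on (0,1), and satisfy ∂²_t(log H(t)) ≥ -2C for all t ∈ (0,1). Then for all t ∈ [0,1]: H(t) ≤ e^{Ct(1-t)}·H(0)^{1-t}·H(1)^{t}. -/
noncomputable section

/-- **logarithmic convexity.** If `H : [0,1] → (0,∞)` is continuous, twice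
differentiable on `(0,1)`, and `∂²_t(log H(t)) ≥ -2C` on `(0,1)` for some `C ≥ 0`, then
`H(t) ≤ e^{Ct(1-t)} H(0)^{1-t} H(1)^t` for all `t ∈ [0,1]`. -/
theorem log_convexity_interpolation
    (C : ℝ) (hC : 0 ≤ C) (H : ℝ → ℝ)
    (hpos : ∀ t ∈ Set.Icc (0 : ℝ) 1, 0 < H t)
    (hcont : ContinuousOn H (Set.Icc 0 1))
    (hdiff : ∀ t ∈ Set.Ioo (0 : ℝ) 1,
      DifferentiableAt ℝ H t ∧ DifferentiableAt ℝ (deriv H) t)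
    (hconv : ∀ t ∈ Set.Ioo (0 : ℝ) 1,
      -(2 * C) ≤ deriv (deriv fun s => Real.log (H s)) t) :
    ∀ t ∈ Set.Icc (0 : ℝ) 1,
      H t ≤ Real.exp (C * t * (1 - t)) * H 0 ^ (1 - t) * H 1 ^ t := by
  intro t ht
  set L : ℝ → ℝ := fun s => Real.log (H s) with hLdef
  have hsub : Set.Ioo (0:ℝ) 1 ⊆ Set.Icc (0:ℝ) 1 := Set.Ioo_subset_Icc_self
  have hne : ∀ s ∈ Set.Icc (0:ℝ) 1, H s ≠ 0 := fun s hs => (hpos s hs).ne'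
  have hLdiff : ∀ s ∈ Set.Ioo (0:ℝ) 1, DifferentiableAt ℝ L s := fun s hs =>
    ((hdiff s hs).1).log (hne s (hsub hs))
  have hL' : ∀ s ∈ Set.Ioo (0:ℝ) 1, deriv L s = deriv H s / H s := fun s hs =>
    deriv.log (hdiff s hs).1 (hne s (hsub hs))
  have hL'diff : ∀ s ∈ Set.Ioo (0:ℝ) 1, DifferentiableAt ℝ (deriv L) s := by
    intro s hs
    have hev : (fun u => deriv H u / H u) =ᶠ[nhds s] deriv L := by
      filter_upwards [isOpen_Ioo.mem_nhds hs] with u hu using (hL' u hu).symm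
    exact (((hdiff s hs).2).div (hdiff s hs).1 (hne s (hsub hs))).congr_of_eventuallyEq
      hev.symm
  set g : ℝ → ℝ := fun s => L s + C * s ^ 2 with hgdef
  have hgcont : ContinuousOn g (Set.Icc 0 1) :=
    (hcont.log hne).add (by fun_prop)
  have hgdiff : ∀ s ∈ Set.Ioo (0:ℝ) 1, DifferentiableAt ℝ g s := fun s hs =>
    (hLdiff s hs).add (by fun_prop)
  have hg' : ∀ s ∈ Set.Ioo (0:ℝ) 1, deriv g s = deriv L s + 2 * C * s := by
    intro s hs
    rw [hgdef]
    rw [deriv_fun_add (hLdiff s hs) (by fun_prop : DifferentiableAt ℝ (fun u => C * u ^ 2) s)]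
    have : deriv (fun u : ℝ => C * u ^ 2) s = C * (2 * s) := by
      simp [deriv_const_mul, mul_comm]
    rw [this]; ring
  have hg'' : ∀ s ∈ Set.Ioo (0:ℝ) 1, 0 ≤ deriv (deriv g) s := by
    intro s hs
    have hev : deriv g =ᶠ[nhds s] fun u => deriv L u + 2 * C * u := by
      filter_upwards [isOpen_Ioo.mem_nhds hs] with u hu using hg' u hu
    rw [hev.deriv_eq]
    rw [deriv_fun_add (hL'diff s hs) (by fun_prop : DifferentiableAt ℝ (fun u => 2 * C * u) s)]
    have h2 : deriv (fun u : ℝ => 2 * C * u) s = 2 * C := by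
      rw [deriv_const_mul _ differentiableAt_fun_id]; simp
    rw [h2]
    have := hconv s hs
    linarith
  have hconvex : ConvexOn ℝ (Set.Icc 0 1) g := by
    apply convexOn_of_deriv2_nonneg (convex_Icc 0 1) hgcont
    · rw [interior_Icc]
      exact fun s hs => (hgdiff s hs).differentiableWithinAt
    · rw [interior_Icc]
      intro s hs
      have hev : deriv g =ᶠ[nhds s] fun u => deriv L u + 2 * C * u := by
        filter_upwards [isOpen_Ioo.mem_nhds hs] with u hu using hg' u hu
      exact (((hL'diff s hs).add (by fun_prop)).congr_of_eventuallyEq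
        hev).differentiableWithinAt
    · rw [interior_Icc]
      intro s hs
      exact hg'' s hs
  obtain ⟨ht0, ht1⟩ := ht
  have key := hconvex.2 (Set.left_mem_Icc.2 zero_le_one) (Set.right_mem_Icc.2 zero_le_one)
    (by linarith : (0:ℝ) ≤ 1 - t) ht0 (by ring : (1 - t) + t = 1)
  simp only [smul_eq_mul, mul_zero, mul_one, zero_add] at key
  -- key : g t ≤ (1 - t) * g 0 + t * g 1
  have hg0 : g 0 = Real.log (H 0) := by simp [hgdef, hLdef]
  have hg1 : g 1 = Real.log (H 1) + C := by simp [hgdef, hLdef]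
  have hlog : Real.log (H t) ≤ C * t * (1 - t) + (1 - t) * Real.log (H 0) +
      t * Real.log (H 1) := by
    have : L t + C * t ^ 2 ≤ (1 - t) * Real.log (H 0) + t * (Real.log (H 1) + C) := by
      rw [← hg0, ← hg1]; exact key
    have hLt : L t = Real.log (H t) := rfl
    nlinarith [this]
  have hHt : 0 < H t := hpos t ⟨ht0, ht1⟩
  calc H t = Real.exp (Real.log (H t)) := (Real.exp_log hHt).symm
    _ ≤ Real.exp (C * t * (1 - t) + (1 - t) * Real.log (H 0) + t * Real.log (H 1)) :=
        Real.exp_le_exp.2 hlog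
    _ = Real.exp (C * t * (1 - t)) * H 0 ^ (1 - t) * H 1 ^ t := by
        rw [Real.exp_add, Real.exp_add,
          Real.rpow_def_of_pos (hpos 0 (Set.left_mem_Icc.2 zero_le_one)),
          Real.rpow_def_of_pos (hpos 1 (Set.right_mem_Icc.2 zero_le_one))]
        ring_nf
end
end
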